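/- Let Ω be an open bounded subset of ℝⁿ, g ∈ C^{α(·)}(D) for D ⊂ Ω open, x₀ ∈ D, 0 < μ ≤ 1/2, d = μ·d_{x₀} where d_{x₀} = dist(x₀, ∂D), and B = B(x₀, d). Then the weighted seminorm on B satisfies [g]^{(2)}_{0,α(·),B} ≤ 8 μ^{2+α⁻_D} [g]^{(2)}_{0,α(·),D}, where [g]^{(2)}_{0,α(·),S} = sup_{x≠y ∈ S} d_{x,y,S}^{α(x)+2} |g(x)−g(y)|/|x−y|^{α(x)} with d_{x,y,S} = min(dist(x,∂S), dist(y,∂S)). -/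

import Mathlib

open Real Set Metric

noncomputable section

/-- The set of values of the weighted quotients defining `[g]^{(2)}_{0,α(·),S}`,
with `d_{x,y,S} = min(dist(x,∂S), dist(y,∂S))`. -/
def wSemiSet2 {n : ℕ} (S : Set (EuclideanSpace ℝ (Fin n)))
    (α g : EuclideanSpace ℝ (Fin n) → ℝ) : Set ℝ :=
  {r | ∃ x ∈ S, ∃ y ∈ S, x ≠ y ∧
    r = min (Metric.infDist x (frontier S)) (Metric.infDist y (frontier S)) ^ (α x + 2) *
        (|g x - g y| / ‖x - y‖ ^ α x)}

section
open Set.Notation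
lemma aux_ball_subset {E : Type*} [NormedAddCommGroup E] [NormedSpace ℝ E] {D : Set E}
    (hDo : IsOpen D) {x₀ : E} (hx₀ : x₀ ∈ D) :
    Metric.ball x₀ (Metric.infDist x₀ (frontier D)) ⊆ D := by
  set r := Metric.infDist x₀ (frontier D) with hr
  rcases le_or_gt r 0 with h | h
  · simp [Metric.ball_eq_empty.2 h]
  · have hdisj : Disjoint (frontier D) (Metric.ball x₀ r) := by
      rw [Set.disjoint_right]
      intro z hz hzf
      have h1 : r ≤ dist x₀ z := Metric.infDist_le_dist_of_mem hzf
      rw [Metric.mem_ball, dist_comm] at hz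
      linarith
    have hcl := isClopen_preimage_val hDo hdisj
    haveI : PreconnectedSpace (Metric.ball x₀ r) :=
      Subtype.preconnectedSpace (convex_ball x₀ r).isPreconnected
    have hne : ((Metric.ball x₀ r : Set E) ↓∩ D).Nonempty :=
      ⟨⟨x₀, Metric.mem_ball_self h⟩, hx₀⟩
    have huniv := hcl.eq_univ hne
    intro z hz
    have : (⟨z, hz⟩ : Metric.ball x₀ r) ∈ ((Metric.ball x₀ r : Set E) ↓∩ D) := by
      rw [huniv]; trivial
    exact this
end

lemma aux_infDist_sphere_le {E : Type*} [NormedAddCommGroup E] [NormedSpace ℝ E] [Nontrivial E]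
    {x₀ x : E} {d : ℝ} (hx : x ∈ Metric.ball x₀ d) :
    Metric.infDist x (Metric.sphere x₀ d) ≤ d := by
  have hd0 : 0 < d := lt_of_le_of_lt dist_nonneg (Metric.mem_ball.1 hx)
  by_cases hxx : x = x₀
  · obtain ⟨z, hz⟩ := NormedSpace.sphere_nonempty (x := x₀) (r := d) |>.2 hd0.le
    calc Metric.infDist x (Metric.sphere x₀ d) ≤ dist x z := Metric.infDist_le_dist_of_mem hz
    _ = d := by rw [hxx, dist_comm]; exact hz
  · set v := x - x₀ with hv
    have hv0 : v ≠ 0 := sub_ne_zero.2 hxx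
    have hvn : 0 < ‖v‖ := norm_pos_iff.2 hv0
    set z := x₀ + (d / ‖v‖) • v with hzdef
    have hzs : z ∈ Metric.sphere x₀ d := by
      simp only [Metric.mem_sphere, hzdef, dist_self_add_left, norm_smul, Real.norm_eq_abs,
        abs_div, abs_norm]
      rw [abs_of_pos hd0, div_mul_cancel₀ _ hvn.ne']
    have hdist : dist x z = d - ‖v‖ := by
      rw [dist_eq_norm]
      have : x - z = (1 - d / ‖v‖) • v := by
        rw [hzdef, hv]; module
      rw [this, norm_smul, Real.norm_eq_abs]
      have hlt : ‖v‖ < d := by rw [hv, ← dist_eq_norm]; exact Metric.mem_ball.1 hx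
      have : 1 - d / ‖v‖ < 0 := by
        rw [sub_neg]; exact (one_lt_div hvn).2 hlt
      rw [abs_of_neg this]
      field_simp
      ring
    calc Metric.infDist x (Metric.sphere x₀ d) ≤ dist x z := Metric.infDist_le_dist_of_mem hzs
      _ ≤ d := by rw [hdist]; linarith [hvn]

theorem stmt_9 {n : ℕ} (Ω D : Set (EuclideanSpace ℝ (Fin n)))
    (hΩo : IsOpen Ω) (hΩb : Bornology.IsBounded Ω) (hDo : IsOpen D) (hDΩ : D ⊆ Ω)
    (α g : EuclideanSpace ℝ (Fin n) → ℝ) (αm αp : ℝ) (hαm : 0 < αm) (hαp : αp < 1)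
    (hα : ∀ x ∈ D, αm ≤ α x ∧ α x ≤ αp)
    (hg : ContinuousOn g D) (hbdd : BddAbove (wSemiSet2 D α g))
    (x₀ : EuclideanSpace ℝ (Fin n)) (hx₀ : x₀ ∈ D)
    (μ : ℝ) (hμ0 : 0 < μ) (hμ : μ ≤ 1 / 2)
    (d : ℝ) (hd : d = μ * Metric.infDist x₀ (frontier D))
    (B : Set (EuclideanSpace ℝ (Fin n))) (hB : B = Metric.ball x₀ d) :
    ∀ x ∈ B, ∀ y ∈ B, x ≠ y →
      min (Metric.infDist x (frontier B)) (Metric.infDist y (frontier B)) ^ (α x + 2) *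
          (|g x - g y| / ‖x - y‖ ^ α x) ≤
        8 * μ ^ (2 + αm) * sSup (wSemiSet2 D α g) := by
  intro x hx y hy hxy
  haveI : Nontrivial (EuclideanSpace ℝ (Fin n)) := nontrivial_of_ne x y hxy
  subst hB
  have hdx : dist x x₀ < d := Metric.mem_ball.1 hx
  have hdy : dist y x₀ < d := Metric.mem_ball.1 hy
  have hd0 : 0 < d := lt_of_le_of_lt dist_nonneg hdx
  set r := Metric.infDist x₀ (frontier D) with hr
  have hr0 : 0 < r := by
    rcases le_or_gt r 0 with h | h
    · nlinarith
    · exact h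
  have hdr : d ≤ r / 2 := by rw [hd]; nlinarith
  -- B ⊆ D
  have hBD : Metric.ball x₀ d ⊆ D := by
    refine subset_trans (Metric.ball_subset_ball ?_) (aux_ball_subset hDo hx₀)
    linarith
  have hxD : x ∈ D := hBD hx
  have hyD : y ∈ D := hBD hy
  -- lower bound on infDist to frontier D
  have hlow : ∀ z ∈ Metric.ball x₀ d, r / 2 ≤ Metric.infDist z (frontier D) := by
    intro z hz
    have h1 : r ≤ Metric.infDist z (frontier D) + dist x₀ z :=
      Metric.infDist_le_infDist_add_dist
    have h2 : dist x₀ z < d := by rw [dist_comm]; exact Metric.mem_ball.1 hz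
    linarith
  set mD := min (Metric.infDist x (frontier D)) (Metric.infDist y (frontier D)) with hmD
  have hmDlow : r / 2 ≤ mD := le_min (hlow x hx) (hlow y hy)
  -- upper bound on infDist to frontier B
  have hfB : frontier (Metric.ball x₀ d) = Metric.sphere x₀ d := frontier_ball x₀ hd0.ne'
  set mB := min (Metric.infDist x (frontier (Metric.ball x₀ d)))
      (Metric.infDist y (frontier (Metric.ball x₀ d))) with hmB
  have hmB0 : 0 ≤ mB := le_min Metric.infDist_nonneg Metric.infDist_nonneg
  have hmBd : mB ≤ d := by
    refine min_le_of_left_le ?_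
    rw [hfB]
    exact aux_infDist_sphere_le hx
  set Q := |g x - g y| / ‖x - y‖ ^ α x with hQ
  have hQ0 : 0 ≤ Q := div_nonneg (abs_nonneg _) (Real.rpow_nonneg (norm_nonneg _) _)
  set e := α x + 2 with he
  have hαx := hα x hxD
  have he0 : 0 < e := by have := hαx.1; simp only [he]; linarith
  -- the element in wSemiSet2
  have hmem : mD ^ e * Q ∈ wSemiSet2 D α g := ⟨x, hxD, y, hyD, hxy, rfl⟩
  have hsup : mD ^ e * Q ≤ sSup (wSemiSet2 D α g) := le_csSup hbdd hmem
  have hsup0 : 0 ≤ sSup (wSemiSet2 D α g) := by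
    refine le_trans ?_ hsup
    exact mul_nonneg (Real.rpow_nonneg (le_min Metric.infDist_nonneg Metric.infDist_nonneg) _) hQ0
  -- main chain
  have step1 : mB ^ e * Q ≤ d ^ e * Q :=
    mul_le_mul_of_nonneg_right (Real.rpow_le_rpow hmB0 hmBd he0.le) hQ0
  have hdeq : d = (2 * μ) * (r / 2) := by rw [hd]; ring
  have step2 : d ^ e = (2 * μ) ^ e * (r / 2) ^ e := by
    rw [hdeq, Real.mul_rpow (by linarith) (by linarith)]
  have h2μ : (2 * μ) ^ e ≤ 8 * μ ^ (2 + αm) := by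
    rw [Real.mul_rpow (by norm_num) hμ0.le]
    have h1 : (2 : ℝ) ^ e ≤ 8 := by
      have : (2 : ℝ) ^ e ≤ (2 : ℝ) ^ (3 : ℝ) := by
        apply Real.rpow_le_rpow_of_exponent_le one_le_two
        have := hαx.2; simp only [he]; linarith
      calc (2 : ℝ) ^ e ≤ (2 : ℝ) ^ (3 : ℝ) := this
        _ = 8 := by
          rw [show (3 : ℝ) = ((3 : ℕ) : ℝ) by norm_num, Real.rpow_natCast]; norm_num
    have h2 : μ ^ e ≤ μ ^ (2 + αm) := by
      apply Real.rpow_le_rpow_of_exponent_ge hμ0 (by linarith)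
      have := hαx.1; simp only [he]; linarith
    have hμe : 0 ≤ μ ^ e := Real.rpow_nonneg hμ0.le _
    calc (2 : ℝ) ^ e * μ ^ e ≤ 8 * μ ^ e := by
          apply mul_le_mul_of_nonneg_right h1 hμe
      _ ≤ 8 * μ ^ (2 + αm) := by
          apply mul_le_mul_of_nonneg_left h2 (by norm_num)
  have hr2e : (r / 2) ^ e ≤ mD ^ e := Real.rpow_le_rpow (by linarith) hmDlow he0.le
  calc mB ^ e * Q ≤ d ^ e * Q := step1
    _ = (2 * μ) ^ e * ((r / 2) ^ e * Q) := by rw [step2]; ring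
    _ ≤ 8 * μ ^ (2 + αm) * ((r / 2) ^ e * Q) := by
        apply mul_le_mul_of_nonneg_right h2μ
          (mul_nonneg (Real.rpow_nonneg (by linarith) _) hQ0)
    _ ≤ 8 * μ ^ (2 + αm) * (mD ^ e * Q) := by
        apply mul_le_mul_of_nonneg_left
          (mul_le_mul_of_nonneg_right hr2e hQ0)
          (by positivity)
    _ ≤ 8 * μ ^ (2 + αm) * sSup (wSemiSet2 D α g) := by
        apply mul_le_mul_of_nonneg_left hsup (by positivity)
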